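/- The ℚ-algebra homomorphism ℚ[X_1, …, X_n] → ℚ[e_1, …, e_n] sending X_ℓ ↦ h_ℓ is an isomorphism (so h_1, …, h_n are algebraically independent generators of ℚ[e_1, …, e_n]), and under this isomorphism the derivation D_ℓ corresponds to the partial derivative ∂/∂X_ℓ for every 1 ≤ ℓ ≤ n; that is, D_ℓ is the partial derivative with respect to the coordinate h_ℓ. -/

import Mathlib

open MvPolynomial Finset

noncomputable def ee (K : Type) [CommRing K] (n : ℕ) : ℕ → MvPolynomial (Fin n) K
  | 0 => 1
  | (m + 1) => if h : m + 1 ≤ n then MvPolynomial.X ⟨m, by omega⟩ else 0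

noncomputable def DD (K : Type) [CommRing K] (n : ℕ) (i : Fin n) :
    MvPolynomial (Fin n) K →ₗ[K] MvPolynomial (Fin n) K :=
  ∑ j : Fin n, if i ≤ j then
    (LinearMap.mulLeft K (ee K n (j.val - i.val))).comp (MvPolynomial.pderiv j).toLinearMap
  else 0

/-- Newton's recursion: `s_{ℓ} = (−1)^{ℓ−1} ℓ e_ℓ + ∑_{j=1}^{ℓ−1} (−1)^{j−1} e_j s_{ℓ−j}`. -/
noncomputable def ss (n : ℕ) : ℕ → MvPolynomial (Fin n) ℚ
  | 0 => 0
  | (ℓ + 1) =>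
    ((-1 : ℚ) ^ ℓ * ((ℓ : ℚ) + 1)) • ee ℚ n (ℓ + 1) +
      ∑ j ∈ Finset.range ℓ, ((-1 : ℚ) ^ j) • (ee ℚ n (j + 1) * ss n (ℓ - j))
decreasing_by omega

/-- `h_ℓ = (−1)^{ℓ−1} s_ℓ / ℓ`, with `ℓ = i + 1`. -/
noncomputable def hh (n : ℕ) (i : Fin n) : MvPolynomial (Fin n) ℚ :=
  ((-1 : ℚ) ^ (i : ℕ) / ((i : ℕ) + 1)) • ss n ((i : ℕ) + 1)

lemma injective_of_surjective_ringEnd {R : Type*} [CommRing R] [IsNoetherianRing R]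
    (f : R →+* R) (hf : Function.Surjective f) : Function.Injective f := by
  have hmono : Monotone fun k => RingHom.ker (f ^ k) := by
    intro k m hkm x hx
    have : f ^ m = f ^ (m - k) * f ^ k := by rw [← pow_add]; congr 1; omega
    simp only [RingHom.mem_ker] at hx ⊢
    rw [this, RingHom.mul_def, RingHom.comp_apply, hx, map_zero]
  obtain ⟨N, hN⟩ := monotone_stabilizes_iff_noetherian.mpr inferInstance
    ⟨fun k => RingHom.ker (f ^ k), hmono⟩
  have key : ∀ x, f x = 0 → x = 0 := by
    intro x hx
    obtain ⟨y, rfl⟩ : ∃ y, (f ^ N) y = x := by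
      have hs : Function.Surjective (f ^ N) := by
        rw [RingHom.coe_pow]; exact Function.Surjective.iterate hf N
      exact hs x
    have hy : (f ^ (N + 1)) y = 0 := by
      rw [pow_succ', RingHom.mul_def, RingHom.comp_apply, hx]
    have hker : y ∈ RingHom.ker (f ^ N) := by
      have h := hN (N + 1) (Nat.le_succ N)
      simp only [OrderHom.coe_mk] at h
      rw [h]; exact hy
    simpa [RingHom.mem_ker] using hker
  intro a b hab
  have h0 : f (a - b) = 0 := by rw [map_sub, hab, sub_self]
  exact sub_eq_zero.mp (key _ h0)

namespace Stmt4Aux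

variable {n : ℕ}

noncomputable def Dder (n : ℕ) (l : Fin n) :
    Derivation ℚ (MvPolynomial (Fin n) ℚ) (MvPolynomial (Fin n) ℚ) :=
  ∑ j : Fin n, (if l ≤ j then ee ℚ n (j.val - l.val) else 0) • (pderiv j)

lemma der_sum_apply {ι : Type*} (s : Finset ι)
    (D : ι → Derivation ℚ (MvPolynomial (Fin n) ℚ) (MvPolynomial (Fin n) ℚ))
    (a : MvPolynomial (Fin n) ℚ) : (∑ i ∈ s, D i) a = ∑ i ∈ s, D i a := by
  induction s using Finset.cons_induction with
  | empty => simp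
  | cons i s hi ih => simp [Finset.sum_cons, Derivation.add_apply, ih]

lemma DD_apply (l : Fin n) (p : MvPolynomial (Fin n) ℚ) :
    DD ℚ n l p = Dder n l p := by
  rw [DD, Dder, LinearMap.sum_apply, der_sum_apply]
  refine Finset.sum_congr rfl fun j _ => ?_
  split_ifs with h
  · simp [Derivation.smul_apply, smul_eq_mul]
  · simp

lemma Dder_X (l i : Fin n) :
    Dder n l (X i) = if l ≤ i then ee ℚ n (i.val - l.val) else 0 := by
  rw [Dder, der_sum_apply]
  rw [Finset.sum_eq_single i]
  · split_ifs with h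
    · simp [Derivation.smul_apply, pderiv_X_self]
    · simp
  · intro j _ hj
    split_ifs with h
    · simp [Derivation.smul_apply, pderiv_X_of_ne (Ne.symm hj)]
    · simp
  · simp

lemma Dder_ee (l : Fin n) (k : ℕ) :
    Dder n l (ee ℚ n k) =
      if (l : ℕ) + 1 ≤ k ∧ k ≤ n then ee ℚ n (k - ((l : ℕ) + 1)) else 0 := by
  match k with
  | 0 => simp [ee, Derivation.map_one_eq_zero]
  | (m + 1) =>
    rw [show ee ℚ n (m+1) = if h : m + 1 ≤ n then X (⟨m, by omega⟩ : Fin n) else 0 from rfl]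
    by_cases h : m + 1 ≤ n
    · rw [dif_pos h, Dder_X]
      have hle : l ≤ (⟨m, by omega⟩ : Fin n) ↔ (l : ℕ) + 1 ≤ m + 1 := by
        simp [Fin.le_def]
      by_cases h2 : (l : ℕ) + 1 ≤ m + 1
      · rw [if_pos (hle.mpr h2), if_pos ⟨h2, h⟩]
        have hidx : m - (l : ℕ) = m + 1 - ((l : ℕ) + 1) := by omega
        show ee ℚ n (m - (l : ℕ)) = ee ℚ n (m + 1 - ((l : ℕ) + 1))
        rw [hidx]
      · rw [if_neg (fun hc => h2 (hle.mp hc)), if_neg (fun hc => h2 hc.1)]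
    · rw [dif_neg h, map_zero, if_neg (fun hc => h hc.2)]

lemma newton (t : ℕ) :
    ∑ k ∈ range (t + 1), ((-1 : ℚ) ^ k) • (ee ℚ n k * ss n (t + 1 - k)) =
      ((-1 : ℚ) ^ t * ((t : ℚ) + 1)) • ee ℚ n (t + 1) := by
  rw [Finset.sum_range_succ']
  have h0 : ((-1 : ℚ) ^ 0) • (ee ℚ n 0 * ss n (t + 1 - 0)) = ss n (t + 1) := by
    simp [ee]
  rw [h0]
  rw [show ss n (t + 1) = ((-1 : ℚ) ^ t * ((t : ℚ) + 1)) • ee ℚ n (t + 1) +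
      ∑ j ∈ Finset.range t, ((-1 : ℚ) ^ j) • (ee ℚ n (j + 1) * ss n (t - j)) from by rw [ss]]
  have hterm : ∀ k ∈ range t, ((-1 : ℚ) ^ (k + 1)) • (ee ℚ n (k + 1) * ss n (t + 1 - (k + 1))) =
      -(((-1 : ℚ) ^ k) • (ee ℚ n (k + 1) * ss n (t - k))) := by
    intro k _
    rw [pow_succ, show t + 1 - (k + 1) = t - k from by omega, mul_neg_one, neg_smul]
  rw [Finset.sum_congr rfl hterm, Finset.sum_neg_distrib]
  abel

lemma Dss (l : Fin n) : ∀ m, 1 ≤ m → m ≤ n →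
    Dder n l (ss n m) =
      if m = (l : ℕ) + 1 then
        (((-1 : ℚ) ^ (l : ℕ)) * ((l : ℕ) + 1)) • (1 : MvPolynomial (Fin n) ℚ)
      else 0 := by
  intro m
  induction m using Nat.strong_induction_on with
  | _ m IH =>
    match m with
    | 0 => exact fun h => absurd h (by omega)
    | (ℓ + 1) =>
      intro _ hmn
      rw [show ss n (ℓ + 1) = ((-1 : ℚ) ^ ℓ * ((ℓ : ℚ) + 1)) • ee ℚ n (ℓ + 1) +
          ∑ j ∈ Finset.range ℓ, ((-1 : ℚ) ^ j) • (ee ℚ n (j + 1) * ss n (ℓ - j)) from by rw [ss]]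
      rw [Derivation.map_add, Derivation.map_smul, map_sum, Dder_ee]
      have hsum : ∀ j ∈ range ℓ,
          Dder n l (((-1 : ℚ) ^ j) • (ee ℚ n (j + 1) * ss n (ℓ - j))) =
            ((-1 : ℚ) ^ j) • (ee ℚ n (j + 1) *
                (if ℓ - j = (l : ℕ) + 1 then
                  (((-1 : ℚ) ^ (l : ℕ)) * ((l : ℕ) + 1)) • (1 : MvPolynomial (Fin n) ℚ)
                else 0) +
              ss n (ℓ - j) * (if (l : ℕ) ≤ j then ee ℚ n (j - (l : ℕ)) else 0)) := by
        intro j hj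
        rw [Finset.mem_range] at hj
        rw [Derivation.map_smul, Derivation.leibniz, smul_eq_mul, smul_eq_mul]
        rw [IH (ℓ - j) (by omega) (by omega) (by omega), Dder_ee]
        have heq : (if (l : ℕ) + 1 ≤ j + 1 ∧ j + 1 ≤ n then ee ℚ n (j + 1 - ((l : ℕ) + 1)) else 0)
            = (if (l : ℕ) ≤ j then ee ℚ n (j - (l : ℕ)) else 0) := by
          have h1 : ((l : ℕ) + 1 ≤ j + 1 ∧ j + 1 ≤ n) ↔ (l : ℕ) ≤ j := by omega
          have h2 : j + 1 - ((l : ℕ) + 1) = j - (l : ℕ) := by omega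
          rw [h2, if_congr h1 rfl rfl]
        rw [heq]
      rw [Finset.sum_congr rfl hsum]
      rcases Nat.lt_trichotomy (ℓ + 1) ((l : ℕ) + 1) with hc | hc | hc
      · -- m < d : everything vanishes
        rw [if_neg (by omega : ¬((l : ℕ) + 1 ≤ ℓ + 1 ∧ ℓ + 1 ≤ n)), smul_zero,
          if_neg (by omega : ¬(ℓ + 1 = (l : ℕ) + 1))]
        rw [Finset.sum_eq_zero, add_zero]
        intro j hj
        rw [Finset.mem_range] at hj
        rw [if_neg (by omega : ¬(ℓ - j = (l : ℕ) + 1)),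
          if_neg (by omega : ¬((l : ℕ) ≤ j)), mul_zero, mul_zero, add_zero, smul_zero]
      · -- m = d
        have hl : ℓ = (l : ℕ) := by omega
        rw [if_pos (by omega : (l : ℕ) + 1 ≤ ℓ + 1 ∧ ℓ + 1 ≤ n), if_pos hc]
        rw [show ℓ + 1 - ((l : ℕ) + 1) = 0 from by omega]
        rw [Finset.sum_eq_zero, add_zero]
        · rw [show (ee ℚ n 0) = 1 from rfl, hl]
        · intro j hj
          rw [Finset.mem_range] at hj
          rw [if_neg (by omega : ¬(ℓ - j = (l : ℕ) + 1)),
            if_neg (by omega : ¬((l : ℕ) ≤ j)), mul_zero, mul_zero, add_zero, smul_zero]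
      · -- m > d
        rw [if_neg (by omega : ¬(ℓ + 1 = (l : ℕ) + 1))]
        obtain ⟨u, rfl⟩ : ∃ u, ℓ = (l : ℕ) + 1 + u := ⟨ℓ - ((l : ℕ) + 1), by omega⟩
        rw [if_pos (by omega : (l : ℕ) + 1 ≤ (l : ℕ) + 1 + u + 1 ∧ (l : ℕ) + 1 + u + 1 ≤ n)]
        rw [show (l : ℕ) + 1 + u + 1 - ((l : ℕ) + 1) = u + 1 from by omega]
        have hsplit : ∀ j ∈ range ((l : ℕ) + 1 + u),
            ((-1 : ℚ) ^ j) • (ee ℚ n (j + 1) *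
                (if (l : ℕ) + 1 + u - j = (l : ℕ) + 1 then
                  (((-1 : ℚ) ^ (l : ℕ)) * ((l : ℕ) + 1)) • (1 : MvPolynomial (Fin n) ℚ)
                else 0) +
              ss n ((l : ℕ) + 1 + u - j) * (if (l : ℕ) ≤ j then ee ℚ n (j - (l : ℕ)) else 0))
            = ((-1 : ℚ) ^ j) • (ee ℚ n (j + 1) *
                (if (l : ℕ) + 1 + u - j = (l : ℕ) + 1 then
                  (((-1 : ℚ) ^ (l : ℕ)) * ((l : ℕ) + 1)) • (1 : MvPolynomial (Fin n) ℚ)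
                else 0)) +
              ((-1 : ℚ) ^ j) • (ss n ((l : ℕ) + 1 + u - j) *
                (if (l : ℕ) ≤ j then ee ℚ n (j - (l : ℕ)) else 0)) :=
          fun j _ => smul_add _ _ _
        rw [Finset.sum_congr rfl hsplit, Finset.sum_add_distrib]
        have hS1 : ∑ j ∈ range ((l : ℕ) + 1 + u), ((-1 : ℚ) ^ j) • (ee ℚ n (j + 1) *
                (if (l : ℕ) + 1 + u - j = (l : ℕ) + 1 then
                  (((-1 : ℚ) ^ (l : ℕ)) * ((l : ℕ) + 1)) • (1 : MvPolynomial (Fin n) ℚ)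
                else 0))
            = (((-1 : ℚ) ^ u) * (((-1 : ℚ) ^ (l : ℕ)) * ((l : ℕ) + 1))) • ee ℚ n (u + 1) := by
          rw [Finset.sum_eq_single u]
          · rw [if_pos (by omega), mul_smul_comm, mul_one, smul_smul]
          · intro j hj hju
            rw [Finset.mem_range] at hj
            rw [if_neg (by omega), mul_zero, smul_zero]
          · intro h; exact absurd (Finset.mem_range.mpr (by omega)) h
        have hS2 : ∑ j ∈ range ((l : ℕ) + 1 + u), ((-1 : ℚ) ^ j) • (ss n ((l : ℕ) + 1 + u - j) *
                (if (l : ℕ) ≤ j then ee ℚ n (j - (l : ℕ)) else 0))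
            = (((-1 : ℚ) ^ (l : ℕ)) * (((-1 : ℚ) ^ u) * ((u : ℚ) + 1))) • ee ℚ n (u + 1) := by
          rw [Finset.range_eq_Ico,
            ← Finset.sum_Ico_consecutive _ (Nat.zero_le (l : ℕ))
              (by omega : (l : ℕ) ≤ (l : ℕ) + 1 + u)]
          have h1 : ∑ j ∈ Finset.Ico 0 (l : ℕ), ((-1 : ℚ) ^ j) •
              (ss n ((l : ℕ) + 1 + u - j) *
                (if (l : ℕ) ≤ j then ee ℚ n (j - (l : ℕ)) else 0)) = 0 := by
            refine Finset.sum_eq_zero fun j hj => ?_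
            rw [Finset.mem_Ico] at hj
            rw [if_neg (by omega), mul_zero, smul_zero]
          rw [h1, zero_add, Finset.sum_Ico_eq_sum_range,
            show (l : ℕ) + 1 + u - (l : ℕ) = u + 1 from by omega]
          have h2 : ∀ k ∈ range (u + 1), ((-1 : ℚ) ^ ((l : ℕ) + k)) •
              (ss n ((l : ℕ) + 1 + u - ((l : ℕ) + k)) *
                (if (l : ℕ) ≤ (l : ℕ) + k then ee ℚ n ((l : ℕ) + k - (l : ℕ)) else 0))
              = ((-1 : ℚ) ^ (l : ℕ)) • (((-1 : ℚ) ^ k) • (ee ℚ n k * ss n (u + 1 - k))) := by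
            intro k hk
            rw [if_pos (by omega), show (l : ℕ) + k - (l : ℕ) = k from by omega,
              show (l : ℕ) + 1 + u - ((l : ℕ) + k) = u + 1 - k from by omega,
              pow_add, mul_comm (ss n (u + 1 - k)) (ee ℚ n k), mul_smul]
          rw [Finset.sum_congr rfl h2, ← Finset.smul_sum, newton u, smul_smul]
        rw [hS1, hS2, ← add_smul, ← add_smul]
        rw [show ((-1 : ℚ) ^ ((l : ℕ) + 1 + u) * (((((l : ℕ) + 1 + u : ℕ)) : ℚ) + 1) +
            ((-1 : ℚ) ^ u * (((-1 : ℚ) ^ (l : ℕ)) * ((l : ℕ) + 1)) +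
              ((-1 : ℚ) ^ (l : ℕ)) * (((-1 : ℚ) ^ u) * ((u : ℚ) + 1))) : ℚ) = 0 from by
          push_cast; ring]
        rw [zero_smul]

lemma coeff_cancel (k : ℕ) :
    ((-1 : ℚ) ^ k / ((k : ℚ) + 1)) * ((-1 : ℚ) ^ k * ((k : ℚ) + 1)) = 1 := by
  have h : ((k : ℚ) + 1) ≠ 0 := by positivity
  have h1 : (-1 : ℚ) ^ k * (-1 : ℚ) ^ k = 1 := by
    rw [← pow_add]; exact Even.neg_one_pow ⟨k, by ring⟩
  field_simp
  linear_combination h1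

lemma Dder_hh (hn : 1 ≤ n) (l i : Fin n) :
    Dder n l (hh n i) = if l = i then 1 else 0 := by
  rw [hh, Derivation.map_smul, Dss l ((i : ℕ) + 1) (by omega) (by omega)]
  by_cases h : l = i
  · rw [if_pos (by rw [h]), if_pos h, smul_smul]
    subst h
    rw [coeff_cancel, one_smul]
  · rw [if_neg (fun hc => h (Fin.ext (by omega))), if_neg h, smul_zero]

lemma part2 (hn : 1 ≤ n) (l : Fin n) (p : MvPolynomial (Fin n) ℚ) :
    DD ℚ n l (aeval (hh n) p) = aeval (hh n) (pderiv l p) := by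
  rw [DD_apply]
  induction p using MvPolynomial.induction_on with
  | C a =>
      rw [aeval_C, pderiv_C, map_zero,
        show ((algebraMap ℚ (MvPolynomial (Fin n) ℚ)) a) = a • 1 from
          Algebra.algebraMap_eq_smul_one a,
        Derivation.map_smul, Derivation.map_one_eq_zero, smul_zero]
  | add p q hp hq =>
      simp only [map_add, hp, hq]
  | mul_X p i hp =>
      rw [map_mul, aeval_X, Derivation.leibniz, hp, Dder_hh hn, Derivation.leibniz]
      simp only [smul_eq_mul, map_add, map_mul, aeval_X]
      by_cases h : l = i
      · subst h
        rw [if_pos rfl, pderiv_X_self, map_one]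
      · rw [if_neg h, pderiv_X_of_ne (fun hc => h hc.symm), map_zero]

noncomputable def Asub (n k : ℕ) : Subalgebra ℚ (MvPolynomial (Fin n) ℚ) :=
  Algebra.adjoin ℚ {q | ∃ j : Fin n, (j : ℕ) < k ∧ q = X j}

lemma Asub_mono {k m : ℕ} (h : k ≤ m) : Asub n k ≤ Asub n m :=
  Algebra.adjoin_mono fun q ⟨j, hj, hq⟩ => ⟨j, by omega, hq⟩

lemma ee_mem (k : ℕ) : ee ℚ n k ∈ Asub n k := by
  match k with
  | 0 => exact one_mem _
  | (m + 1) =>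
    rw [show ee ℚ n (m + 1) = if h : m + 1 ≤ n then X (⟨m, by omega⟩ : Fin n) else 0 from rfl]
    split_ifs with h
    · exact Algebra.subset_adjoin ⟨⟨m, by omega⟩, by simp, rfl⟩
    · exact zero_mem _

lemma ss_mem : ∀ m, ss n m ∈ Asub n m := by
  intro m
  induction m using Nat.strong_induction_on with
  | _ m IH =>
    match m with
    | 0 => rw [show ss n 0 = 0 from by rw [ss]]; exact zero_mem _
    | (ℓ + 1) =>
      rw [show ss n (ℓ + 1) = ((-1 : ℚ) ^ ℓ * ((ℓ : ℚ) + 1)) • ee ℚ n (ℓ + 1) +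
          ∑ j ∈ Finset.range ℓ, ((-1 : ℚ) ^ j) • (ee ℚ n (j + 1) * ss n (ℓ - j)) from by rw [ss]]
      refine add_mem (Subalgebra.smul_mem _ (ee_mem _) _) (sum_mem fun j hj => ?_)
      rw [Finset.mem_range] at hj
      exact Subalgebra.smul_mem _ (mul_mem (Asub_mono (by omega) (ee_mem (j + 1)))
        (Asub_mono (by omega) (IH (ℓ - j) (by omega)))) _

lemma ss_tail_mem (ℓ : ℕ) :
    (∑ j ∈ Finset.range ℓ, ((-1 : ℚ) ^ j) • (ee ℚ n (j + 1) * ss n (ℓ - j))) ∈ Asub n ℓ :=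
  sum_mem fun j hj => by
    rw [Finset.mem_range] at hj
    exact Subalgebra.smul_mem _ (mul_mem (Asub_mono (by omega) (ee_mem (j + 1)))
      (Asub_mono (by omega) (ss_mem (ℓ - j)))) _

lemma X_mem_range (hn : 1 ≤ n) : ∀ (k : ℕ) (i : Fin n), (i : ℕ) = k →
    X i ∈ (aeval (hh n) : MvPolynomial (Fin n) ℚ →ₐ[ℚ] MvPolynomial (Fin n) ℚ).range := by
  intro k
  induction k using Nat.strong_induction_on with
  | _ k IH =>
    intro i hik
    have hA : Asub n (i : ℕ) ≤
        ((aeval (hh n) : MvPolynomial (Fin n) ℚ →ₐ[ℚ] MvPolynomial (Fin n) ℚ).range) := by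
      apply Algebra.adjoin_le
      rintro q ⟨j, hj, rfl⟩
      exact IH (j : ℕ) (by omega) j rfl
    have h1 : ee ℚ n ((i : ℕ) + 1) = X i := by
      rw [show ee ℚ n ((i : ℕ) + 1) =
          if h : (i : ℕ) + 1 ≤ n then X (⟨(i : ℕ), by omega⟩ : Fin n) else 0 from rfl,
        dif_pos (by omega : (i : ℕ) + 1 ≤ n)]
    have h2 : hh n i = X i + ((-1 : ℚ) ^ (i : ℕ) / ((i : ℕ) + 1)) •
        (∑ j ∈ Finset.range (i : ℕ), ((-1 : ℚ) ^ j) •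
          (ee ℚ n (j + 1) * ss n ((i : ℕ) - j))) := by
      rw [hh, show ss n ((i : ℕ) + 1) =
          ((-1 : ℚ) ^ (i : ℕ) * (((i : ℕ) : ℚ) + 1)) • ee ℚ n ((i : ℕ) + 1) +
          ∑ j ∈ Finset.range (i : ℕ), ((-1 : ℚ) ^ j) •
            (ee ℚ n (j + 1) * ss n ((i : ℕ) - j)) from by rw [ss],
        smul_add, smul_smul, coeff_cancel, one_smul, h1]
    have h3 : X i = hh n i - ((-1 : ℚ) ^ (i : ℕ) / ((i : ℕ) + 1)) •
        (∑ j ∈ Finset.range (i : ℕ), ((-1 : ℚ) ^ j) •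
          (ee ℚ n (j + 1) * ss n ((i : ℕ) - j))) := by
      rw [h2]; ring
    rw [h3]
    exact sub_mem ⟨X i, aeval_X _ i⟩
      (hA (Subalgebra.smul_mem _ (ss_tail_mem (i : ℕ)) _))

lemma surj (hn : 1 ≤ n) :
    Function.Surjective (aeval (hh n) : MvPolynomial (Fin n) ℚ →ₐ[ℚ] MvPolynomial (Fin n) ℚ) := by
  intro p
  have htop : (⊤ : Subalgebra ℚ (MvPolynomial (Fin n) ℚ)) ≤
      (aeval (hh n) : MvPolynomial (Fin n) ℚ →ₐ[ℚ] MvPolynomial (Fin n) ℚ).range := by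
    rw [← MvPolynomial.adjoin_range_X]
    apply Algebra.adjoin_le
    rintro q ⟨i, rfl⟩
    exact X_mem_range hn (i : ℕ) i rfl
  exact htop (Algebra.mem_top : p ∈ ⊤)

end Stmt4Aux

theorem stmt4 (n : ℕ) (hn : 1 ≤ n) :
    Function.Bijective
      (MvPolynomial.aeval (hh n) : MvPolynomial (Fin n) ℚ →ₐ[ℚ] MvPolynomial (Fin n) ℚ) ∧
    ∀ (l : Fin n) (p : MvPolynomial (Fin n) ℚ),
      DD ℚ n l (MvPolynomial.aeval (hh n) p) =
        MvPolynomial.aeval (hh n) (MvPolynomial.pderiv l p) := by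
  refine ⟨⟨?_, Stmt4Aux.surj hn⟩, fun l p => Stmt4Aux.part2 hn l p⟩
  exact injective_of_surjective_ringEnd
    (MvPolynomial.aeval (hh n) : MvPolynomial (Fin n) ℚ →ₐ[ℚ] MvPolynomial (Fin n) ℚ).toRingHom
    (Stmt4Aux.surj hn)
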